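/- Let n ≥ 3 be an odd integer and k an integral domain. If the quandle ring k[R_n] of the dihedral quandle R_n has only trivial idempotents, then the set of idempotents of k[R_{2n}] equals { β e_j + (1−β) e_{n+j} + ∑_{i=0}^{n−1} α_i (e_i − e_{n+i} + e_{2j−i} − e_{n+2j−i}) : 0 ≤ j ≤ n−1 and α_0, …, α_{n−1}, β ∈ k }, where all subscripts are taken modulo 2n. -/

import Mathlib

/-- The quandle ring multiplication on `X →₀ k` determined by
`e_x · e_y = e_{op x y}` extended bilinearly. -/
noncomputable def qmul {X : Type*} {k : Type*} [CommRing k] (op : X → X → X)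
    (f g : X →₀ k) : X →₀ k :=
  f.sum fun x a => g.sum fun y b => Finsupp.single (op x y) (a * b)

/-- The dihedral quandle operation on `ZMod n`: `i ∗ j = 2j - i`. -/
def dihedralOp (n : ℕ) : ZMod n → ZMod n → ZMod n := fun i j => 2 * j - i

section Aux
variable {k : Type*} [CommRing k]

lemma qmul_eq (m : ℕ) (f g : ZMod m →₀ k) :
    qmul (dihedralOp m) f g = f.sum fun x a => a • Finsupp.mapDomain (fun y => 2 * y - x) g := by
  simp only [qmul, dihedralOp]
  refine Finsupp.sum_congr fun x _ => ?_
  rw [Finsupp.mapDomain, Finsupp.smul_sum]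
  refine Finsupp.sum_congr fun y _ => ?_
  rw [Finsupp.smul_single, smul_eq_mul]

lemma mapDomain_double (m : ℕ) (x : ZMod m) (g : ZMod m →₀ k) :
    Finsupp.mapDomain (fun y => 2 * y - x) g
      = Finsupp.mapDomain (fun t => t - x) (Finsupp.mapDomain (fun y : ZMod m => 2 * y) g) := by
  have h : (fun y : ZMod m => 2 * y - x) = (fun t => t - x) ∘ (fun y : ZMod m => 2 * y) := rfl
  rw [h, Finsupp.mapDomain_comp]

lemma qmul_of_double_eq_zero (m : ℕ) (f g : ZMod m →₀ k)
    (h : Finsupp.mapDomain (fun y : ZMod m => 2 * y) g = 0) :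
    qmul (dihedralOp m) f g = 0 := by
  rw [qmul_eq]
  trans f.sum fun _ _ => (0 : ZMod m →₀ k)
  · refine Finsupp.sum_congr fun x _ => ?_
    rw [mapDomain_double, h, Finsupp.mapDomain_zero, smul_zero]
  · exact Finset.sum_const_zero

lemma qmul_of_double_eq_single (m : ℕ) (f g : ZMod m →₀ k) (z : ZMod m)
    (h : Finsupp.mapDomain (fun y : ZMod m => 2 * y) g = Finsupp.single z 1) :
    qmul (dihedralOp m) f g = Finsupp.mapDomain (fun x => z - x) f := by
  rw [qmul_eq, Finsupp.mapDomain]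
  refine Finsupp.sum_congr fun x _ => ?_
  rw [mapDomain_double, h, Finsupp.mapDomain_single, Finsupp.smul_single, smul_eq_mul, mul_one]

lemma castHom_qmul (n : ℕ) (hdvd : n ∣ 2 * n) (f g : ZMod (2 * n) →₀ k) :
    Finsupp.mapDomain (ZMod.castHom hdvd (ZMod n)) (qmul (dihedralOp (2 * n)) f g)
      = qmul (dihedralOp n) (Finsupp.mapDomain (ZMod.castHom hdvd (ZMod n)) f)
          (Finsupp.mapDomain (ZMod.castHom hdvd (ZMod n)) g) := by
  set c := ZMod.castHom hdvd (ZMod n) with hc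
  rw [qmul_eq, qmul_eq, Finsupp.mapDomain_sum]
  have hidx := Finsupp.sum_mapDomain_index (f := ⇑c) (s := f)
    (h := fun x' a => a • Finsupp.mapDomain (fun y => 2 * y - x') (Finsupp.mapDomain ⇑c g))
    (fun b => zero_smul _ _) (fun b m₁ m₂ => add_smul _ _ _)
  rw [hidx]
  refine Finsupp.sum_congr fun x _ => ?_
  rw [Finsupp.mapDomain_smul]
  congr 1
  rw [← Finsupp.mapDomain_comp, ← Finsupp.mapDomain_comp]
  congr 1
  funext y
  simp only [Function.comp_apply, map_sub, map_mul, map_ofNat]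

end Aux

section Fib
variable {k : Type*} [CommRing k]

lemma key_dvd (n : ℕ) (hn : 0 < n) (w : ZMod (2 * n)) (h : n ∣ w.val) :
    w = 0 ∨ w = (n : ZMod (2 * n)) := by
  haveI : NeZero (2 * n) := ⟨by omega⟩
  obtain ⟨c, hc⟩ := h
  have hlt := ZMod.val_lt w
  have hw : ((w.val : ℕ) : ZMod (2 * n)) = w := ZMod.natCast_rightInverse w
  have hc2 : c < 2 := by
    by_contra h'
    push_neg at h'
    have := Nat.mul_le_mul_left n h'
    omega
  interval_cases c
  · left; rw [← hw, hc, mul_zero, Nat.cast_zero]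
  · right; rw [← hw, hc, mul_one]

lemma natCast_n_add_self (n : ℕ) :
    (n : ZMod (2 * n)) + (n : ZMod (2 * n)) = 0 := by
  have h : ((2 * n : ℕ) : ZMod (2 * n)) = 0 := ZMod.natCast_self _
  push_cast at h
  linear_combination h

lemma natCast_n_ne_zero (n : ℕ) (hn : 0 < n) : (n : ZMod (2 * n)) ≠ 0 := by
  haveI : NeZero (2 * n) := ⟨by omega⟩
  intro h
  rw [ZMod.natCast_eq_zero_iff] at h
  have := Nat.le_of_dvd hn h
  omega

lemma two_mul_eq_zero_iff (n : ℕ) (hn : 0 < n) (w : ZMod (2 * n)) :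
    2 * w = 0 ↔ w = 0 ∨ w = (n : ZMod (2 * n)) := by
  haveI : NeZero (2 * n) := ⟨by omega⟩
  constructor
  · intro h
    apply key_dvd n hn
    have hw : ((w.val : ℕ) : ZMod (2 * n)) = w := ZMod.natCast_rightInverse w
    have h2 : ((2 * w.val : ℕ) : ZMod (2 * n)) = 0 := by
      push_cast [hw]
      linear_combination h
    rw [ZMod.natCast_eq_zero_iff] at h2
    exact (mul_dvd_mul_iff_left (two_ne_zero)).mp h2
  · rintro (rfl | rfl)
    · rw [mul_zero]
    · exact natCast_n_add_self n ▸ (two_mul (n : ZMod (2*n))).symm ▸ rfl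

lemma cast_eq_zero_iff' (n : ℕ) (hn : 0 < n) (hdvd : n ∣ 2 * n) (w : ZMod (2 * n)) :
    ZMod.castHom hdvd (ZMod n) w = 0 ↔ w = 0 ∨ w = (n : ZMod (2 * n)) := by
  haveI : NeZero (2 * n) := ⟨by omega⟩
  constructor
  · intro h
    apply key_dvd n hn
    have hw : ((w.val : ℕ) : ZMod (2 * n)) = w := ZMod.natCast_rightInverse w
    rw [← hw, map_natCast] at h
    rwa [ZMod.natCast_eq_zero_iff] at h
  · rintro (rfl | rfl)
    · rw [map_zero]
    · rw [map_natCast, ZMod.natCast_self]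

lemma double_fiber (n : ℕ) (hn : 0 < n) (z y : ZMod (2 * n)) :
    2 * z = 2 * y ↔ z = y ∨ z = y + (n : ZMod (2 * n)) := by
  have h1 : 2 * z = 2 * y ↔ 2 * (z - y) = 0 :=
    ⟨fun h => by linear_combination h, fun h => by linear_combination h⟩
  rw [h1, two_mul_eq_zero_iff n hn, sub_eq_zero, sub_eq_iff_eq_add']


lemma cast_fiber (n : ℕ) (hn : 0 < n) (hdvd : n ∣ 2 * n) (z y : ZMod (2 * n)) :
    ZMod.castHom hdvd (ZMod n) z = ZMod.castHom hdvd (ZMod n) y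
      ↔ z = y ∨ z = y + (n : ZMod (2 * n)) := by
  rw [← sub_eq_zero, ← map_sub, cast_eq_zero_iff' n hn, sub_eq_zero, sub_eq_iff_eq_add']


lemma sum_if_eq {X : Type*} [DecidableEq X] (u : X →₀ k) (a : X) :
    (u.sum fun z b => if z = a then b else 0) = u a := by
  rw [Finsupp.sum, Finset.sum_ite_eq' u.support a (fun z => u z)]
  by_cases h : a ∈ u.support
  · rw [if_pos h]
  · rw [if_neg h]; exact (Finsupp.notMem_support_iff.mp h).symm

lemma fiber_apply (n : ℕ) (hn : 0 < n) {M : Type*} [DecidableEq M] (f : ZMod (2 * n) → M)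
    (hf : ∀ z y, f z = f y ↔ z = y ∨ z = y + (n : ZMod (2 * n)))
    (u : ZMod (2 * n) →₀ k) (y : ZMod (2 * n)) :
    Finsupp.mapDomain f u (f y) = u y + u (y + (n : ZMod (2 * n))) := by
  classical
  have hyne : y ≠ y + (n : ZMod (2 * n)) := by
    intro h
    exact natCast_n_ne_zero n hn (by linear_combination -h)
  rw [Finsupp.mapDomain, Finsupp.sum_apply]
  trans u.sum fun z b => (if z = y then b else 0) + (if z = y + (n : ZMod (2 * n)) then b else 0)
  · refine Finsupp.sum_congr fun z _ => ?_
    rw [Finsupp.single_apply]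
    by_cases h1 : z = y
    · rw [if_pos ((hf z y).mpr (Or.inl h1)), if_pos h1,
        if_neg (by rw [h1]; exact hyne), add_zero]
    · by_cases h2 : z = y + (n : ZMod (2 * n))
      · rw [if_pos ((hf z y).mpr (Or.inr h2)), if_neg h1, if_pos h2, zero_add]
      · rw [if_neg (fun hc => by rcases (hf z y).mp hc with h | h; exacts [h1 h, h2 h]),
          if_neg h1, if_neg h2, add_zero]
  · rw [Finsupp.sum_add]
    rw [sum_if_eq, sum_if_eq]

end Fib

section Tmpl
variable {k : Type*} [CommRing k]

noncomputable def tmpl (n : ℕ) (j : ℕ) (β : k) (α : ℕ → k) : ZMod (2 * n) →₀ k :=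
  Finsupp.single ((j : ZMod (2 * n))) β
    + Finsupp.single ((n : ZMod (2 * n)) + j) (1 - β)
    + ∑ i ∈ Finset.range n, α i •
        (Finsupp.single ((i : ZMod (2 * n))) (1 : k)
          - Finsupp.single ((n : ZMod (2 * n)) + i) 1
          + Finsupp.single (2 * (j : ZMod (2 * n)) - i) 1
          - Finsupp.single ((n : ZMod (2 * n)) + 2 * j - i) 1)

lemma if_iff {p q : Prop} [Decidable p] [Decidable q] {γ : Type*} (h : p ↔ q) (a b : γ) :
    (if p then a else b) = if q then a else b := if_congr h rfl rfl

lemma tmpl_apply (n : ℕ) (j : ℕ) (β : k) (α : ℕ → k) (x : ZMod (2 * n)) :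
    tmpl n j β α x =
      (if ((j : ZMod (2 * n))) = x then β else 0)
      + (if ((n : ZMod (2 * n)) + j) = x then 1 - β else 0)
      + ∑ i ∈ Finset.range n, α i *
          ((if ((i : ZMod (2 * n))) = x then (1:k) else 0)
            - (if ((n : ZMod (2 * n)) + i) = x then 1 else 0)
            + (if (2 * (j : ZMod (2 * n)) - i) = x then 1 else 0)
            - (if ((n : ZMod (2 * n)) + 2 * j - i) = x then 1 else 0)) := by
  simp only [tmpl, Finsupp.add_apply, Finsupp.finset_sum_apply, Finsupp.smul_apply,
    Finsupp.sub_apply, Finsupp.single_apply, smul_eq_mul]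

def CondA (n j : ℕ) (u : ZMod (2 * n) →₀ k) : Prop :=
  ∀ y, u y + u (y + (n : ZMod (2 * n))) =
    if ((j : ZMod n)) = ZMod.castHom (dvd_mul_left n 2) (ZMod n) y then 1 else 0

def CondB (n j : ℕ) (u : ZMod (2 * n) →₀ k) : Prop :=
  ∀ y, u (2 * (j : ZMod (2 * n)) - y) = u y

end Tmpl

section CondFwd
variable {k : Type*} [CommRing k]

lemma tmpl_condB (n : ℕ) (hn : 0 < n) (j : ℕ) (β : k) (α : ℕ → k) :
    CondB n j (tmpl n j β α) := by
  intro y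
  have hnn := natCast_n_add_self n
  rw [tmpl_apply, tmpl_apply]
  rw [if_iff (show ((j : ZMod (2*n))) = 2 * (j : ZMod (2*n)) - y ↔ ((j : ZMod (2*n))) = y from
    ⟨fun h => by linear_combination -h, fun h => by linear_combination -h⟩) β 0]
  rw [if_iff (show ((n : ZMod (2*n)) + j) = 2 * (j : ZMod (2*n)) - y
      ↔ ((n : ZMod (2*n)) + j) = y from
    ⟨fun h => by linear_combination hnn - h, fun h => by linear_combination hnn - h⟩) (1-β) 0]
  congr 1
  refine Finset.sum_congr rfl fun i _ => ?_
  rw [if_iff (show ((i : ZMod (2*n))) = 2 * (j : ZMod (2*n)) - y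
      ↔ (2 * (j : ZMod (2*n)) - i) = y from
    ⟨fun h => by linear_combination -h, fun h => by linear_combination -h⟩) (1:k) 0]
  rw [if_iff (show ((n : ZMod (2*n)) + i) = 2 * (j : ZMod (2*n)) - y
      ↔ ((n : ZMod (2*n)) + 2 * j - i) = y from
    ⟨fun h => by linear_combination hnn - h, fun h => by linear_combination hnn - h⟩) (1:k) 0]
  rw [if_iff (show (2 * (j : ZMod (2*n)) - i) = 2 * (j : ZMod (2*n)) - y
      ↔ ((i : ZMod (2*n))) = y from
    ⟨fun h => by linear_combination -h, fun h => by linear_combination -h⟩) (1:k) 0]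
  rw [if_iff (show ((n : ZMod (2*n)) + 2 * j - i) = 2 * (j : ZMod (2*n)) - y
      ↔ ((n : ZMod (2*n)) + i) = y from
    ⟨fun h => by linear_combination hnn - h, fun h => by linear_combination hnn - h⟩) (1:k) 0]
  ring

end CondFwd

section CondFwdA
variable {k : Type*} [CommRing k]

lemma tmpl_condA (n : ℕ) (hn : 0 < n) (j : ℕ) (β : k) (α : ℕ → k) :
    CondA n j (tmpl n j β α) := by
  intro y
  have hnn := natCast_n_add_self n
  have hne := natCast_n_ne_zero n hn
  rw [tmpl_apply, tmpl_apply]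
  have hS : (∑ i ∈ Finset.range n, α i *
        ((if ((i : ZMod (2*n))) = y then (1:k) else 0)
          - (if ((n : ZMod (2*n)) + i) = y then 1 else 0)
          + (if (2 * (j : ZMod (2*n)) - i) = y then 1 else 0)
          - (if ((n : ZMod (2*n)) + 2 * j - i) = y then 1 else 0)))
      + (∑ i ∈ Finset.range n, α i *
        ((if ((i : ZMod (2*n))) = y + (n : ZMod (2*n)) then (1:k) else 0)
          - (if ((n : ZMod (2*n)) + i) = y + (n : ZMod (2*n)) then 1 else 0)
          + (if (2 * (j : ZMod (2*n)) - i) = y + (n : ZMod (2*n)) then 1 else 0)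
          - (if ((n : ZMod (2*n)) + 2 * j - i) = y + (n : ZMod (2*n)) then 1 else 0))) = 0 := by
    rw [← Finset.sum_add_distrib]
    refine Finset.sum_eq_zero fun i _ => ?_
    rw [if_iff (show ((i : ZMod (2*n))) = y + (n : ZMod (2*n))
        ↔ ((n : ZMod (2*n)) + i) = y from
      ⟨fun h => by linear_combination h + hnn, fun h => by linear_combination h - hnn⟩) (1:k) 0]
    rw [if_iff (show ((n : ZMod (2*n)) + i) = y + (n : ZMod (2*n))
        ↔ ((i : ZMod (2*n))) = y from
      ⟨fun h => by linear_combination h, fun h => by linear_combination h⟩) (1:k) 0]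
    rw [if_iff (show (2 * (j : ZMod (2*n)) - i) = y + (n : ZMod (2*n))
        ↔ ((n : ZMod (2*n)) + 2 * j - i) = y from
      ⟨fun h => by linear_combination h + hnn, fun h => by linear_combination h - hnn⟩) (1:k) 0]
    rw [if_iff (show ((n : ZMod (2*n)) + 2 * j - i) = y + (n : ZMod (2*n))
        ↔ (2 * (j : ZMod (2*n)) - i) = y from
      ⟨fun h => by linear_combination h, fun h => by linear_combination h⟩) (1:k) 0]
    ring
  rw [if_iff (show ((j : ZMod (2*n))) = y + (n : ZMod (2*n))
      ↔ ((n : ZMod (2*n)) + j) = y from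
    ⟨fun h => by linear_combination h + hnn, fun h => by linear_combination h - hnn⟩) β 0]
  rw [if_iff (show ((n : ZMod (2*n)) + j) = y + (n : ZMod (2*n))
      ↔ ((j : ZMod (2*n))) = y from
    ⟨fun h => by linear_combination h, fun h => by linear_combination h⟩) (1-β) 0]
  have hcj : (ZMod.castHom (dvd_mul_left n 2) (ZMod n)) ((j : ZMod (2*n))) = ((j : ZMod n)) :=
    map_natCast _ j
  have hor : (((j : ZMod n)) = ZMod.castHom (dvd_mul_left n 2) (ZMod n) y)
      ↔ (((j : ZMod (2*n))) = y ∨ ((n : ZMod (2*n)) + j) = y) := by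
    rw [← hcj, cast_fiber n hn (dvd_mul_left n 2) ((j : ZMod (2*n))) y]
    exact or_congr Iff.rfl
      ⟨fun h => by linear_combination h + hnn, fun h => by linear_combination h - hnn⟩
  rw [if_iff hor (1:k) 0]
  by_cases h1 : ((j : ZMod (2*n))) = y <;> by_cases h2 : ((n : ZMod (2*n)) + j) = y
  · exact absurd (by linear_combination h2 - h1) hne
  · rw [if_pos h1, if_pos h1, if_neg h2, if_neg h2, if_pos (Or.inl h1)]
    linear_combination hS
  · rw [if_neg h1, if_neg h1, if_pos h2, if_pos h2, if_pos (Or.inr h2)]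
    linear_combination hS
  · rw [if_neg h1, if_neg h1, if_neg h2, if_neg h2,
      if_neg (by rintro (h | h); exacts [h1 h, h2 h])]
    linear_combination hS

end CondFwdA

section Glue
variable {k : Type*} [CommRing k]

lemma cond_double (n : ℕ) (hn : 0 < n) (j : ℕ) (u : ZMod (2 * n) →₀ k)
    (ha : CondA n j u) :
    Finsupp.mapDomain (fun y : ZMod (2 * n) => 2 * y) u
      = Finsupp.single (2 * (j : ZMod (2 * n))) 1 := by
  classical
  ext t
  have hDf := double_fiber n hn
  by_cases hex : ∃ y : ZMod (2 * n), 2 * y = t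
  · obtain ⟨y, rfl⟩ := hex
    have h1 : Finsupp.mapDomain (fun y : ZMod (2 * n) => 2 * y) u ((fun y : ZMod (2*n) => 2*y) y)
        = u y + u (y + (n : ZMod (2 * n))) :=
      fiber_apply n hn _ (fun z y => hDf z y) u y
    rw [h1, ha y, Finsupp.single_apply]
    refine if_iff ?_ _ _
    have hcj : (ZMod.castHom (dvd_mul_left n 2) (ZMod n)) ((j : ZMod (2*n))) = ((j : ZMod n)) :=
      map_natCast _ j
    rw [← hcj, cast_fiber n hn (dvd_mul_left n 2) ((j : ZMod (2*n))) y, ← hDf]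
  · push_neg at hex
    rw [Finsupp.mapDomain_notin_range _ _ (by rintro ⟨y, hy⟩; exact hex y hy),
      Finsupp.single_apply, if_neg (fun h => hex _ h)]

lemma cond_symm_fix (n : ℕ) (j : ℕ) (u : ZMod (2 * n) →₀ k)
    (hb : CondB n j u) :
    Finsupp.mapDomain (fun x : ZMod (2 * n) => 2 * (j : ZMod (2 * n)) - x) u = u := by
  have hinj : Function.Injective (fun x : ZMod (2 * n) => 2 * (j : ZMod (2 * n)) - x) :=
    fun a b hab => by simpa using by linear_combination -hab
  have h1 : ∀ x, Finsupp.mapDomain (fun x : ZMod (2 * n) => 2 * (j : ZMod (2 * n)) - x) u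
      ((fun x : ZMod (2 * n) => 2 * (j : ZMod (2 * n)) - x) x) = u x :=
    fun x => Finsupp.mapDomain_apply hinj u x
  ext x
  have h2 := h1 (2 * (j : ZMod (2 * n)) - x)
  simp only at h2
  rw [show 2 * ((j:ℕ) : ZMod (2*n)) - (2 * ((j:ℕ) : ZMod (2*n)) - x) = x by ring] at h2
  rw [h2, hb]

lemma cond_idem (n : ℕ) (hn : 0 < n) (j : ℕ) (u : ZMod (2 * n) →₀ k)
    (ha : CondA n j u) (hb : CondB n j u) :
    qmul (dihedralOp (2 * n)) u u = u := by
  rw [qmul_of_double_eq_single (2 * n) u u (2 * (j : ZMod (2 * n))) (cond_double n hn j u ha)]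
  exact cond_symm_fix n j u hb

lemma cond_ne_zero [Nontrivial k] (n : ℕ) (j : ℕ) (u : ZMod (2 * n) →₀ k)
    (ha : CondA n j u) : u ≠ 0 := by
  intro h0
  have := ha ((j : ZMod (2 * n)))
  rw [h0] at this
  simp only [Finsupp.coe_zero, Pi.zero_apply, add_zero] at this
  rw [if_pos (map_natCast _ j).symm] at this
  exact zero_ne_one this

end Glue

section IdemToCond
variable {k : Type*} [CommRing k]

lemma cast_inj_lt (m : ℕ) (hm : 0 < m) (a b : ℕ) (ha : a < m) (hb : b < m)
    (h : ((a : ℕ) : ZMod m) = ((b : ℕ) : ZMod m)) : a = b := by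
  haveI : NeZero m := ⟨by omega⟩
  have h2 := congrArg ZMod.val h
  rwa [ZMod.val_natCast, ZMod.val_natCast, Nat.mod_eq_of_lt ha, Nat.mod_eq_of_lt hb] at h2

lemma idem_to_cond [IsDomain k] (n : ℕ) (hn3 : 3 ≤ n)
    (htriv : ∀ u : ZMod n →₀ k, u ≠ 0 → qmul (dihedralOp n) u u = u →
      ∃ x : ZMod n, u = Finsupp.single x 1)
    (u : ZMod (2 * n) →₀ k) (hu : u ≠ 0) (hsq : qmul (dihedralOp (2 * n)) u u = u) :
    ∃ j : ℕ, j < n ∧ CondA n j u ∧ CondB n j u := by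
  classical
  haveI : NeZero n := ⟨by omega⟩
  haveI : NeZero (2 * n) := ⟨by omega⟩
  have hn : 0 < n := by omega
  have hfibC := cast_fiber n hn (dvd_mul_left n 2)
  have hfib_apply : ∀ y, Finsupp.mapDomain (ZMod.castHom (dvd_mul_left n 2) (ZMod n)) u
      ((ZMod.castHom (dvd_mul_left n 2) (ZMod n)) y) = u y + u (y + (n : ZMod (2*n))) :=
    fun y => fiber_apply n hn _ hfibC u y
  have hPne : Finsupp.mapDomain (ZMod.castHom (dvd_mul_left n 2) (ZMod n)) u ≠ 0 := by
    intro h0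
    have hD : Finsupp.mapDomain (fun y : ZMod (2 * n) => 2 * y) u = 0 := by
      ext t
      rw [Finsupp.coe_zero, Pi.zero_apply]
      by_cases hex : ∃ y : ZMod (2 * n), 2 * y = t
      · obtain ⟨y, rfl⟩ := hex
        have h1 : Finsupp.mapDomain (fun y : ZMod (2 * n) => 2 * y) u
            ((fun y : ZMod (2 * n) => 2 * y) y) = u y + u (y + (n : ZMod (2*n))) :=
          fiber_apply n hn _ (double_fiber n hn) u y
        have h2 := hfib_apply y
        rw [h0, Finsupp.coe_zero, Pi.zero_apply] at h2
        rw [h1, ← h2]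
      · push_neg at hex
        exact Finsupp.mapDomain_notin_range _ _ (by rintro ⟨y, hy⟩; exact hex y hy)
    have h3 := qmul_of_double_eq_zero (2 * n) u u hD
    rw [hsq] at h3
    exact hu h3
  have hPidem : qmul (dihedralOp n)
      (Finsupp.mapDomain (ZMod.castHom (dvd_mul_left n 2) (ZMod n)) u)
      (Finsupp.mapDomain (ZMod.castHom (dvd_mul_left n 2) (ZMod n)) u)
      = Finsupp.mapDomain (ZMod.castHom (dvd_mul_left n 2) (ZMod n)) u := by
    rw [← castHom_qmul n (dvd_mul_left n 2) u u, hsq]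
  obtain ⟨xb, hxb⟩ := htriv _ hPne hPidem
  have hxj : ((xb.val : ℕ) : ZMod n) = xb := ZMod.natCast_rightInverse xb
  have hA : CondA n xb.val u := by
    intro y
    rw [← hfib_apply y, hxb, Finsupp.single_apply, hxj]
  refine ⟨xb.val, ZMod.val_lt xb, hA, ?_⟩
  have hD1 : Finsupp.mapDomain (fun y : ZMod (2 * n) => 2 * y) u
      = Finsupp.single (2 * ((xb.val : ℕ) : ZMod (2 * n))) 1 := cond_double n hn xb.val u hA
  have hq := qmul_of_double_eq_single (2 * n) u u (2 * ((xb.val : ℕ) : ZMod (2 * n))) hD1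
  have hEq : Finsupp.mapDomain (fun x : ZMod (2 * n) => 2 * ((xb.val : ℕ) : ZMod (2 * n)) - x) u
      = u := by rw [← hq, hsq]
  intro y
  have hinj : Function.Injective
      (fun x : ZMod (2 * n) => 2 * ((xb.val : ℕ) : ZMod (2 * n)) - x) :=
    fun a b hab => by simpa using by linear_combination -hab
  have h4 := Finsupp.mapDomain_apply hinj u y
  rw [hEq] at h4
  exact h4

end IdemToCond

section Recon
variable {k : Type*} [CommRing k]

lemma sum_indic (n : ℕ) (hn : 0 < n) (g : ℕ → k) (z : ZMod (2*n)) (a : ℕ) (ha : a < n)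
    (hz : ((a : ℕ) : ZMod (2*n)) = z) :
    (∑ i ∈ Finset.range n, if ((i : ℕ) : ZMod (2*n)) = z then g i else 0) = g a := by
  refine (Finset.sum_eq_single_of_mem a (Finset.mem_range.mpr ha) fun i hi hne => ?_).trans
    (if_pos hz)
  exact if_neg fun h => hne (cast_inj_lt (2*n) (by omega) i a
    (by have := Finset.mem_range.mp hi; omega) (by omega) (h.trans hz.symm))

lemma sum_indic0 (n : ℕ) (g : ℕ → k) (z : ZMod (2*n))
    (h : ∀ i, i < n → ((i : ℕ) : ZMod (2*n)) ≠ z) :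
    (∑ i ∈ Finset.range n, if ((i : ℕ) : ZMod (2*n)) = z then g i else 0) = 0 :=
  Finset.sum_eq_zero fun i hi => if_neg (h i (Finset.mem_range.mp hi))

lemma cond_to_tmpl (n : ℕ) (hn3 : 3 ≤ n) (hodd : Odd n) (j : ℕ) (hj : j < n)
    (u : ZMod (2*n) →₀ k) (ha : CondA n j u) (hb : CondB n j u) :
    ∃ (β : k) (α : ℕ → k), u = tmpl n j β α := by
  classical
  haveI : NeZero n := ⟨by omega⟩
  haveI : NeZero (2*n) := ⟨by omega⟩
  have hn : 0 < n := by omega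
  have hnn := natCast_n_add_self n
  set s : ℕ → ℕ := fun i => (2*j + n - i) % n with hs
  set β : k := u ((j : ZMod (2*n))) with hβ
  set α : ℕ → k := fun i => if i = j ∨ s i < i then 0 else u ((i : ZMod (2*n))) with hα
  refine ⟨β, α, ?_⟩
  -- facts about s
  have hslt : ∀ i, s i < n := fun i => Nat.mod_lt _ hn
  have hscast : ∀ i, i < n → ((s i : ℕ) : ZMod n) = 2*((j:ℕ) : ZMod n) - ((i:ℕ) : ZMod n) := by
    intro i hi
    simp only [hs]
    rw [ZMod.natCast_mod, Nat.cast_sub (by omega : i ≤ 2*j + n)]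
    push_cast
    rw [ZMod.natCast_self]
    ring
  have hssi : ∀ i, i < n → s (s i) = i := by
    intro i hi
    apply cast_inj_lt n hn _ _ (hslt _) hi
    rw [hscast (s i) (hslt i), hscast i hi]
    ring
  have hsj : s j = j := by
    apply cast_inj_lt n hn _ _ (hslt j) hj
    rw [hscast j hj]
    ring
  have hfix : ∀ i, i < n → s i = i → i = j := by
    intro i hi hsi
    obtain ⟨r, hr⟩ := hodd
    have hhalf : ((r+1 : ℕ) : ZMod n) * 2 = 1 := by
      have h1 : ((2*r + 2 : ℕ) : ZMod n) = ((n + 1 : ℕ) : ZMod n) := by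
        rw [show 2*r+2 = n+1 by omega]
      push_cast at h1 ⊢
      rw [ZMod.natCast_self] at h1
      linear_combination h1
    have h2 := hscast i hi
    rw [hsi] at h2
    apply cast_inj_lt n hn i j hi hj
    linear_combination ((r+1 : ℕ) : ZMod n) * h2 - (((i:ℕ) : ZMod n) - ((j:ℕ) : ZMod n)) * hhalf
  have hsne : ∀ i, i < n → i ≠ j → s i ≠ j := fun i hi hij hcon =>
    hij (by rw [← hssi i hi, hcon, hsj])
  have hcne : ∀ i, i < n → i ≠ j →
      ¬(((j : ℕ) : ZMod n) = ZMod.castHom (dvd_mul_left n 2) (ZMod n)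
        ((s i : ℕ) : ZMod (2*n))) := by
    intro i hi hij hcon
    rw [map_natCast] at hcon
    exact hsne i hi hij (cast_inj_lt n hn j (s i) hj (hslt i) hcon).symm
  -- the main evaluation at representatives
  have hmain : ∀ i, i < n → tmpl n j β α ((i : ℕ) : ZMod (2*n)) = u ((i : ℕ) : ZMod (2*n)) := by
    intro i hi
    set m : ℕ := (2*j + 2*n - i) % (2*n) with hm
    have hm2 : m < 2*n := Nat.mod_lt _ (by omega)
    have hm1 : ((m : ℕ) : ZMod (2*n)) = 2*((j:ℕ) : ZMod (2*n)) - ((i:ℕ) : ZMod (2*n)) := by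
      simp only [hm]
      rw [ZMod.natCast_mod, Nat.cast_sub (by omega : i ≤ 2*j + 2*n)]
      push_cast
      linear_combination hnn
    have hm3 : m % n = s i := by
      simp only [hm, hs]
      rw [Nat.mod_mod_of_dvd _ (dvd_mul_left n 2),
        show 2*j + 2*n - i = (2*j + n - i) + n by omega, Nat.add_mod_right]
    rw [tmpl_apply]
    rw [if_iff (show ((j:ℕ) : ZMod (2*n)) = ((i:ℕ) : ZMod (2*n)) ↔ i = j from
      ⟨fun h => cast_inj_lt (2*n) (by omega) i j (by omega) (by omega) h.symm,
        fun h => by rw [h]⟩) β 0]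
    rw [if_neg (show ¬((n : ZMod (2*n)) + (j : ℕ)) = ((i:ℕ) : ZMod (2*n)) from fun h => by
      have h1 : ((n + j : ℕ) : ZMod (2*n)) = ((i:ℕ) : ZMod (2*n)) := by
        push_cast
        linear_combination h
      have h2 := cast_inj_lt (2*n) (by omega) (n+j) i (by omega) (by omega) h1
      omega)]
    have hsum_eq : (∑ i' ∈ Finset.range n, α i' *
          ((if ((i' : ℕ) : ZMod (2*n)) = ((i:ℕ) : ZMod (2*n)) then (1:k) else 0)
            - (if ((n : ZMod (2*n)) + i') = ((i:ℕ) : ZMod (2*n)) then 1 else 0)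
            + (if (2 * ((j:ℕ) : ZMod (2*n)) - i') = ((i:ℕ) : ZMod (2*n)) then 1 else 0)
            - (if ((n : ZMod (2*n)) + 2 * j - i') = ((i:ℕ) : ZMod (2*n)) then 1 else 0)))
        = (∑ i' ∈ Finset.range n,
            if ((i' : ℕ) : ZMod (2*n)) = ((i:ℕ) : ZMod (2*n)) then α i' else 0)
          - (∑ i' ∈ Finset.range n,
            if ((i' : ℕ) : ZMod (2*n)) = ((i:ℕ) : ZMod (2*n)) + (n : ZMod (2*n))
              then α i' else 0)
          + (∑ i' ∈ Finset.range n,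
            if ((i' : ℕ) : ZMod (2*n)) = 2 * ((j:ℕ) : ZMod (2*n)) - ((i:ℕ) : ZMod (2*n))
              then α i' else 0)
          - (∑ i' ∈ Finset.range n,
            if ((i' : ℕ) : ZMod (2*n)) = (n : ZMod (2*n)) + 2 * ((j:ℕ) : ZMod (2*n))
              - ((i:ℕ) : ZMod (2*n)) then α i' else 0) := by
      rw [← Finset.sum_sub_distrib, ← Finset.sum_add_distrib, ← Finset.sum_sub_distrib]
      refine Finset.sum_congr rfl fun i' _ => ?_
      rw [if_iff (show ((n : ZMod (2*n)) + i') = ((i:ℕ) : ZMod (2*n))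
          ↔ ((i' : ℕ) : ZMod (2*n)) = ((i:ℕ) : ZMod (2*n)) + (n : ZMod (2*n)) from
        ⟨fun h => by linear_combination h - hnn, fun h => by linear_combination h + hnn⟩) (1:k) 0]
      rw [if_iff (show (2 * ((j:ℕ) : ZMod (2*n)) - i') = ((i:ℕ) : ZMod (2*n))
          ↔ ((i' : ℕ) : ZMod (2*n)) = 2 * ((j:ℕ) : ZMod (2*n)) - ((i:ℕ) : ZMod (2*n)) from
        ⟨fun h => by linear_combination -h, fun h => by linear_combination -h⟩) (1:k) 0]
      rw [if_iff (show ((n : ZMod (2*n)) + 2 * j - i') = ((i:ℕ) : ZMod (2*n))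
          ↔ ((i' : ℕ) : ZMod (2*n)) = (n : ZMod (2*n)) + 2 * ((j:ℕ) : ZMod (2*n))
            - ((i:ℕ) : ZMod (2*n)) from
        ⟨fun h => by linear_combination -h, fun h => by linear_combination -h⟩) (1:k) 0]
      split_ifs <;> ring
    rw [hsum_eq]
    rw [sum_indic n hn α _ i hi rfl]
    rw [sum_indic0 n α _ (fun i'' hi'' h => by
      have h1 : ((i'' : ℕ) : ZMod (2*n)) = ((i + n : ℕ) : ZMod (2*n)) := by
        rw [h]; push_cast; ring
      have h2 := cast_inj_lt (2*n) (by omega) i'' (i+n) (by omega) (by omega) h1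
      omega)]
    rcases Nat.lt_or_ge m n with hcase | hcase
    · -- m < n : positive sign, s i = m
      have hsi_m : s i = m := by rw [← hm3, Nat.mod_eq_of_lt hcase]
      rw [sum_indic n hn α _ m hcase hm1]
      rw [sum_indic0 n α _ (fun i'' hi'' h => by
        have hz4 : ((n + m : ℕ) : ZMod (2*n)) = (n : ZMod (2*n)) + 2 * ((j:ℕ) : ZMod (2*n))
            - ((i:ℕ) : ZMod (2*n)) := by
          push_cast
          linear_combination hm1
        have h1 := h.trans hz4.symm
        have h2 := cast_inj_lt (2*n) (by omega) i'' (n+m) (by omega) (by omega) h1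
        omega)]
      rw [← hsi_m]
      by_cases hij : i = j
      · have hαj : α j = 0 := by simp [hα]
        rw [if_pos hij, hij, hsj, hαj, hβ]
        ring
      · rcases lt_trichotomy i (s i) with hlt | heq | hgt
        · have hαi : α i = u ((i : ℕ) : ZMod (2*n)) := by
            simp only [hα]
            rw [if_neg (by push_neg; exact ⟨hij, by omega⟩)]
          have hαsi : α (s i) = 0 := by
            simp only [hα]
            exact if_pos (Or.inr (by rw [hssi i hi]; exact hlt))
          rw [if_neg hij, hαi, hαsi]
          ring
        · exact absurd (hfix i hi heq.symm) hij
        · have hαi : α i = 0 := by simp only [hα]; exact if_pos (Or.inr hgt)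
          have hαsi : α (s i) = u ((s i : ℕ) : ZMod (2*n)) := by
            simp only [hα]
            rw [if_neg (by push_neg; exact ⟨hsne i hi hij, by rw [hssi i hi]; omega⟩)]
          have hurel : u ((s i : ℕ) : ZMod (2*n)) = u ((i : ℕ) : ZMod (2*n)) := by
            rw [hsi_m, hm1]
            exact hb _
          rw [if_neg hij, hαi, hαsi, hurel]
          ring
    · -- m ≥ n : negative sign, m = s i + n
      have hmsn : m = s i + n := by
        have h5 : m % n = m - n := by
          rw [Nat.mod_eq_sub_mod hcase, Nat.mod_eq_of_lt (by omega)]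
        omega
      have hij : i ≠ j := by
        intro h
        have h1 : ((m : ℕ) : ZMod (2*n)) = ((j : ℕ) : ZMod (2*n)) := by
          rw [hm1, h]; ring
        have h2 := cast_inj_lt (2*n) (by omega) m j (by omega) (by omega) h1
        omega
      have hz5 : ((s i : ℕ) : ZMod (2*n)) = (n : ZMod (2*n)) + 2 * ((j:ℕ) : ZMod (2*n))
          - ((i:ℕ) : ZMod (2*n)) := by
        have h6 : ((m : ℕ) : ZMod (2*n)) = ((s i : ℕ) : ZMod (2*n)) + (n : ZMod (2*n)) := by
          rw [hmsn]; push_cast; ring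
        linear_combination hm1 - h6 - hnn
      rw [sum_indic0 n α _ (fun i'' hi'' h => by
        have h1 := h.trans hm1.symm
        have h2 := cast_inj_lt (2*n) (by omega) i'' m (by omega) (by omega) h1
        omega)]
      rw [sum_indic n hn α _ (s i) (hslt i) hz5]
      have hurel : u ((s i : ℕ) : ZMod (2*n)) = - u ((i : ℕ) : ZMod (2*n)) := by
        have h6 : u (((s i : ℕ) : ZMod (2*n)) + (n : ZMod (2*n)))
            = u ((i : ℕ) : ZMod (2*n)) := by
          rw [show ((s i : ℕ) : ZMod (2*n)) + (n : ZMod (2*n))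
              = 2 * ((j:ℕ) : ZMod (2*n)) - ((i:ℕ) : ZMod (2*n)) from by
            linear_combination hz5 + hnn]
          exact hb _
        have h7 := ha (((s i : ℕ) : ZMod (2*n)))
        rw [if_neg (hcne i hi hij)] at h7
        linear_combination h7 - h6
      rw [if_neg hij]
      rcases lt_trichotomy i (s i) with hlt | heq | hgt
      · have hαi : α i = u ((i : ℕ) : ZMod (2*n)) := by
          simp only [hα]
          rw [if_neg (by push_neg; exact ⟨hij, by omega⟩)]
        have hαsi : α (s i) = 0 := by
          simp only [hα]
          exact if_pos (Or.inr (by rw [hssi i hi]; exact hlt))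
        rw [hαi, hαsi]
        ring
      · exact absurd (hfix i hi heq.symm) hij
      · have hαi : α i = 0 := by simp only [hα]; exact if_pos (Or.inr hgt)
        have hαsi : α (s i) = u ((s i : ℕ) : ZMod (2*n)) := by
          simp only [hα]
          rw [if_neg (by push_neg; exact ⟨hsne i hi hij, by rw [hssi i hi]; omega⟩)]
        rw [hαi, hαsi, hurel]
        ring
  -- conclude by extensionality
  ext x
  obtain ⟨a, hva, rfl⟩ : ∃ a : ℕ, a < 2*n ∧ ((a : ℕ) : ZMod (2*n)) = x :=
    ⟨x.val, ZMod.val_lt x, ZMod.natCast_rightInverse x⟩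
  rcases Nat.lt_or_ge a n with hlt | hge
  · exact (hmain a hlt).symm
  · have hi : a - n < n := by omega
    have hxe : ((a : ℕ) : ZMod (2*n)) = ((a - n : ℕ) : ZMod (2*n)) + (n : ZMod (2*n)) := by
      have h0 : ((a : ℕ) : ZMod (2*n)) = ((a - n + n : ℕ) : ZMod (2*n)) :=
        congrArg _ (by omega)
      rw [h0]
      push_cast
      ring
    have h8 := ha (((a - n : ℕ) : ZMod (2*n)))
    have h9 := tmpl_condA n hn j β α (((a - n : ℕ) : ZMod (2*n)))
    have h10 := hmain (a - n) hi
    rw [hxe]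
    linear_combination h8 - h9 + h10

end Recon

/-- Let `n ≥ 3` be odd and `k` an integral domain. If `k[R_n]` has only
trivial idempotents, then the idempotents of `k[R_{2n}]` are exactly the
elements `β e_j + (1-β) e_{n+j} + ∑_{i=0}^{n-1} α_i (e_i - e_{n+i} + e_{2j-i}
- e_{n+2j-i})` with `0 ≤ j ≤ n-1` and `α_i, β ∈ k` (indices mod `2n`). -/
theorem idempotents_of_dihedral_double_cover {k : Type*} [CommRing k] [IsDomain k]
    (n : ℕ) (hn : 3 ≤ n) (hodd : Odd n)
    (htriv : ∀ u : ZMod n →₀ k, u ≠ 0 → qmul (dihedralOp n) u u = u →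
      ∃ x : ZMod n, u = Finsupp.single x 1) :
    {u : ZMod (2 * n) →₀ k | u ≠ 0 ∧ qmul (dihedralOp (2 * n)) u u = u} =
      {u : ZMod (2 * n) →₀ k | ∃ (j : ℕ) (β : k) (α : ℕ → k), j < n ∧
        u = Finsupp.single ((j : ZMod (2 * n))) β
            + Finsupp.single ((n : ZMod (2 * n)) + j) (1 - β)
            + ∑ i ∈ Finset.range n, α i •
                (Finsupp.single ((i : ZMod (2 * n))) (1 : k)
                  - Finsupp.single ((n : ZMod (2 * n)) + i) 1
                  + Finsupp.single (2 * (j : ZMod (2 * n)) - i) 1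
                  - Finsupp.single ((n : ZMod (2 * n)) + 2 * j - i) 1)} := by
  have hn0 : 0 < n := by omega
  ext u
  simp only [Set.mem_setOf_eq]
  constructor
  · rintro ⟨hu, hsq⟩
    obtain ⟨j, hj, hA, hB⟩ := idem_to_cond n hn htriv u hu hsq
    obtain ⟨β, α, hEq⟩ := cond_to_tmpl n hn hodd j hj u hA hB
    exact ⟨j, β, α, hj, hEq⟩
  · rintro ⟨j, β, α, hj, rfl⟩
    exact ⟨cond_ne_zero n j _ (tmpl_condA n hn0 j β α),
      cond_idem n hn0 j _ (tmpl_condA n hn0 j β α) (tmpl_condB n hn0 j β α)⟩
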